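/- Let P ⊆ ℝ^d be a full-dimensional nearly Gorenstein lattice polytope. Then there exists a reflexive polytope Q ⊆ ℝ^d such that every primitive inner facet normal n_F of P is a lattice point on the boundary of the polar dual Q*, i.e. {n_F : F a facet of P} ⊆ ∂Q* ∩ (ℤ^d)*, and moreover every vertex of Q* occurs as a facet normal of P, i.e. vert(Q*) ⊆ {n_F : F a facet of P}. -/

import Mathlib

open Set Pointwise

/-- The set of lattice points of `ℝ^d`. -/
def latticePoints (d : ℕ) : Set (Fin d → ℝ) :=
  {x | ∀ i, ∃ z : ℤ, x i = (z : ℝ)}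

/-- A lattice polytope: the convex hull of a finite set of lattice points. -/
def IsLatticePolytope {d : ℕ} (P : Set (Fin d → ℝ)) : Prop :=
  ∃ V : Finset (Fin d → ℝ), (V : Set (Fin d → ℝ)) ⊆ latticePoints d ∧
    P = convexHull ℝ (V : Set (Fin d → ℝ))

/-- The natural pairing of an integral linear functional with a point of `ℝ^d`. -/
def pairing {d : ℕ} (n : Fin d → ℤ) (x : Fin d → ℝ) : ℝ :=
  ∑ i, (n i : ℝ) * x i

/-- `P = {x | n_F(x) ≥ -h_F}` is an irredundant presentation with primitive
integral inner normals, i.e. the facet presentation of `P`. -/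
def IsFacetPresentation {d m : ℕ} (P : Set (Fin d → ℝ))
    (n : Fin m → Fin d → ℤ) (h : Fin m → ℤ) : Prop :=
  P = {x | ∀ i, pairing (n i) x ≥ -(h i : ℝ)} ∧
  (∀ i, Finset.univ.gcd (n i) = 1) ∧
  (∀ i, ∃ x : Fin d → ℝ, pairing (n i) x < -(h i : ℝ) ∧
    ∀ j, j ≠ i → pairing (n j) x ≥ -(h j : ℝ))

/-- `a` is the codegree of `P`: the least `k ≥ 1` such that `int(kP)` contains
a lattice point. -/
def IsCodegree {d : ℕ} (P : Set (Fin d → ℝ)) (a : ℕ) : Prop :=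
  1 ≤ a ∧ (interior ((a : ℝ) • P) ∩ latticePoints d).Nonempty ∧
    ∀ k : ℕ, 1 ≤ k → (interior ((k : ℝ) • P) ∩ latticePoints d).Nonempty → a ≤ k

/-- The floor polytope `⌊R⌋ = conv(int(R) ∩ ℤ^d)`. -/
def floorPoly {d : ℕ} (R : Set (Fin d → ℝ)) : Set (Fin d → ℝ) :=
  convexHull ℝ (interior R ∩ latticePoints d)

/-- The remainder polytope `{P} = conv{x ∈ ℤ^d | n_F(x) ≥ (a-1)h_F - 1}`,
defined in terms of the facet presentation data and the codegree `a`. -/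
def remPoly {d m : ℕ} (n : Fin m → Fin d → ℤ) (h : Fin m → ℤ) (a : ℕ) :
    Set (Fin d → ℝ) :=
  convexHull ℝ {x | x ∈ latticePoints d ∧
    ∀ i, pairing (n i) x ≥ ((a : ℝ) - 1) * (h i : ℝ) - 1}

/-- The cone `C_P ⊆ ℝ^d × ℝ` over `P`, in terms of the facet presentation. -/
def coneOver {d m : ℕ} (n : Fin m → Fin d → ℤ) (h : Fin m → ℤ) :
    Set ((Fin d → ℝ) × ℝ) :=
  {p | ∀ i, pairing (n i) p.1 ≥ -(p.2 * (h i : ℝ))}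

/-- The interior `int(C_P)` of the cone over `P`. -/
def intCone {d m : ℕ} (n : Fin m → Fin d → ℤ) (h : Fin m → ℤ) :
    Set ((Fin d → ℝ) × ℝ) :=
  {p | ∀ i, pairing (n i) p.1 > -(p.2 * (h i : ℝ))}

/-- The anticanonical set `ant(C_P)` of the cone over `P`. -/
def antCone {d m : ℕ} (n : Fin m → Fin d → ℤ) (h : Fin m → ℤ) :
    Set ((Fin d → ℝ) × ℝ) :=
  {p | ∀ i, pairing (n i) p.1 ≥ -(p.2 * (h i : ℝ)) - 1}

/-- Lattice points of `ℝ^d × ℝ = ℝ^{d+1}`. -/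
def latticePairs (d : ℕ) : Set ((Fin d → ℝ) × ℝ) :=
  {p | p.1 ∈ latticePoints d ∧ ∃ z : ℤ, p.2 = (z : ℝ)}

/-- The nearly Gorenstein condition with respect to a given facet presentation:
`(C_P ∩ ℤ^{d+1}) \ {0} ⊆ (int(C_P) ∩ ℤ^{d+1}) + (ant(C_P) ∩ ℤ^{d+1})`. -/
def NGIncl {d m : ℕ} (n : Fin m → Fin d → ℤ) (h : Fin m → ℤ) : Prop :=
  (coneOver n h ∩ latticePairs d) \ {(0 : (Fin d → ℝ) × ℝ)} ⊆
    (intCone n h ∩ latticePairs d) + (antCone n h ∩ latticePairs d)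

/-- A full-dimensional lattice polytope is nearly Gorenstein if the nearly
Gorenstein inclusion holds for its facet presentation. -/
def NearlyGorenstein {d : ℕ} (P : Set (Fin d → ℝ)) : Prop :=
  ∃ (m : ℕ) (n : Fin m → Fin d → ℤ) (h : Fin m → ℤ),
    IsFacetPresentation P n h ∧ NGIncl n h

/-- The polar dual `Q* = {y | y(x) ≥ -1 for all x ∈ Q}`. -/
def polarDual {d : ℕ} (Q : Set (Fin d → ℝ)) : Set (Fin d → ℝ) :=
  {y | ∀ x ∈ Q, (∑ i, y i * x i) ≥ -1}

/-- A reflexive polytope: a lattice polytope with `0` in its interior whose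
polar dual is again a lattice polytope. -/
def IsReflexive {d : ℕ} (Q : Set (Fin d → ℝ)) : Prop :=
  IsLatticePolytope Q ∧ (0 : Fin d → ℝ) ∈ interior Q ∧
    IsLatticePolytope (polarDual Q)

/-- A Gorenstein polytope: some dilate `kP`, translated by a lattice vector,
is reflexive. -/
def IsGorenstein {d : ℕ} (P : Set (Fin d → ℝ)) : Prop :=
  ∃ (k : ℕ) (w : Fin d → ℝ), 1 ≤ k ∧ w ∈ latticePoints d ∧
    IsReflexive ((fun x => x - w) '' ((k : ℝ) • P))

/-- The integer decomposition property. -/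
def IsIDP {d : ℕ} (P : Set (Fin d → ℝ)) : Prop :=
  ∀ k : ℕ, 1 ≤ k → ∀ x ∈ ((k : ℝ) • P) ∩ latticePoints d,
    ∃ y : Fin k → Fin d → ℝ, (∀ j, y j ∈ P ∩ latticePoints d) ∧ x = ∑ j, y j

/-- Minkowski indecomposability of a lattice polytope. -/
def IsIndecomposable {d : ℕ} (P : Set (Fin d → ℝ)) : Prop :=
  (¬ ∃ p : Fin d → ℝ, P = {p}) ∧
  ∀ P₁ P₂ : Set (Fin d → ℝ), IsLatticePolytope P₁ → IsLatticePolytope P₂ →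
    P = P₁ + P₂ → (∃ p, P₁ = {p}) ∨ (∃ p, P₂ = {p})

/-- A `(0,1)`-polytope: the convex hull of a set of `(0,1)`-vectors. -/
def Is01Polytope {d : ℕ} (P : Set (Fin d → ℝ)) : Prop :=
  ∃ V : Finset (Fin d → ℝ), (∀ v ∈ V, ∀ i, v i = 0 ∨ v i = 1) ∧
    P = convexHull ℝ (V : Set (Fin d → ℝ))


namespace NGaux12

open Finset

variable {d : ℕ}

/-- real dot product on `Fin d → ℝ` -/
def rdot (y x : Fin d → ℝ) : ℝ := ∑ i, y i * x i

lemma pairing_eq_rdot (n : Fin d → ℤ) (x : Fin d → ℝ) :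
    pairing n x = rdot (fun i => (n i : ℝ)) x := rfl

lemma rdot_add_right (y x x' : Fin d → ℝ) : rdot y (x + x') = rdot y x + rdot y x' := by
  simp [rdot, Pi.add_apply, mul_add, Finset.sum_add_distrib]

lemma rdot_smul_right (c : ℝ) (y x : Fin d → ℝ) : rdot y (c • x) = c * rdot y x := by
  simp only [rdot, Pi.smul_apply, smul_eq_mul, Finset.mul_sum]
  exact Finset.sum_congr rfl (fun i _ => by ring)

lemma rdot_sub_right (y x x' : Fin d → ℝ) : rdot y (x - x') = rdot y x - rdot y x' := by
  simp [rdot, Pi.sub_apply, mul_sub, Finset.sum_sub_distrib]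

lemma rdot_neg_right (y x : Fin d → ℝ) : rdot y (-x) = -rdot y x := by
  simp [rdot]

lemma rdot_comm (y x : Fin d → ℝ) : rdot y x = rdot x y := by
  simp [rdot, mul_comm]

lemma rdot_add_left (y y' x : Fin d → ℝ) : rdot (y + y') x = rdot y x + rdot y' x := by
  rw [rdot_comm, rdot_add_right, rdot_comm x y, rdot_comm x y']

lemma rdot_smul_left (c : ℝ) (y x : Fin d → ℝ) : rdot (c • y) x = c * rdot y x := by
  rw [rdot_comm, rdot_smul_right, rdot_comm]

lemma rdot_sum_left {α : Type*} (s : Finset α) (f : α → Fin d → ℝ) (x : Fin d → ℝ) :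
    rdot (∑ a ∈ s, f a) x = ∑ a ∈ s, rdot (f a) x := by
  classical
  induction s using Finset.induction_on with
  | empty => simp [rdot]
  | insert _ _ hns ih =>
      rw [Finset.sum_insert hns, Finset.sum_insert hns, rdot_add_left, ih]

lemma continuous_rdot_left (x : Fin d → ℝ) : Continuous fun y : Fin d → ℝ => rdot y x := by
  unfold rdot
  exact continuous_finset_sum _ (fun i _ => (continuous_apply i).mul continuous_const)

lemma pairing_add (n : Fin d → ℤ) (x x' : Fin d → ℝ) :
    pairing n (x + x') = pairing n x + pairing n x' := rdot_add_right _ _ _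

lemma pairing_smul (n : Fin d → ℤ) (c : ℝ) (x : Fin d → ℝ) :
    pairing n (c • x) = c * pairing n x := rdot_smul_right _ _ _

lemma pairing_sub (n : Fin d → ℤ) (x x' : Fin d → ℝ) :
    pairing n (x - x') = pairing n x - pairing n x' := rdot_sub_right _ _ _

lemma pairing_neg (n : Fin d → ℤ) (x : Fin d → ℝ) : pairing n (-x) = -pairing n x :=
  rdot_neg_right _ _

lemma pairing_int (n : Fin d → ℤ) (z : Fin d → ℤ) :
    pairing n (fun i => (z i : ℝ)) = ((∑ i, n i * z i : ℤ) : ℝ) := by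
  unfold pairing
  push_cast
  rfl

lemma latt_exists {x : Fin d → ℝ} (hx : x ∈ latticePoints d) :
    ∃ z : Fin d → ℤ, x = fun i => (z i : ℝ) := by
  choose z hz using hx
  exact ⟨z, funext hz⟩

lemma latt_of_int (z : Fin d → ℤ) : (fun i => (z i : ℝ)) ∈ latticePoints d :=
  fun i => ⟨z i, rfl⟩

lemma pairing_abs_le (n : Fin d → ℤ) (x : Fin d → ℝ) :
    |pairing n x| ≤ (∑ i, |(n i : ℝ)|) * ‖x‖ := by
  calc |pairing n x| ≤ ∑ i, |(n i : ℝ) * x i| := Finset.abs_sum_le_sum_abs _ _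
    _ ≤ ∑ i, |(n i : ℝ)| * ‖x‖ := by
        refine Finset.sum_le_sum (fun i _ => ?_)
        rw [abs_mul]
        exact mul_le_mul_of_nonneg_left (by simpa using norm_le_pi_norm x i) (abs_nonneg _)
    _ = (∑ i, |(n i : ℝ)|) * ‖x‖ := by rw [Finset.sum_mul]

lemma clm_eq_rdot (f : (Fin d → ℝ) →L[ℝ] ℝ) (x : Fin d → ℝ) :
    f x = rdot x (fun i => f (fun j => if i = j then 1 else 0)) := by
  conv_lhs => rw [pi_eq_sum_univ x, map_sum]
  unfold rdot
  exact Finset.sum_congr rfl (fun i _ => by rw [map_smul]; simp [smul_eq_mul])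

end NGaux12

open NGaux12

set_option maxHeartbeats 4000000

theorem stmt_12 {d : ℕ} (hd : 1 ≤ d) (P : Set (Fin d → ℝ))
    (hP : IsLatticePolytope P) (hfull : (interior P).Nonempty)
    {m : ℕ} (n : Fin m → Fin d → ℤ) (h : Fin m → ℤ)
    (hpres : IsFacetPresentation P n h) (hng : NGIncl n h) :
    ∃ Q : Set (Fin d → ℝ), IsReflexive Q ∧
      (∀ i, (fun j => (n i j : ℝ)) ∈ frontier (polarDual Q) ∩ latticePoints d) ∧
      (polarDual Q).extremePoints ℝ ⊆ {v | ∃ i, v = fun j => (n i j : ℝ)} := by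

  classical
  obtain ⟨hPdef, hgcd, -⟩ := hpres
  obtain ⟨V, hVlat, hPeq⟩ := hP
  have hmemP : ∀ x, x ∈ P ↔ ∀ j, pairing (n j) x ≥ -(h j : ℝ) := by
    intro x; rw [hPdef]; exact Iff.rfl
  have hPcpt : IsCompact P := hPeq ▸ V.finite_toSet.isCompact_convexHull ℝ
  obtain ⟨R, hR0, hRb⟩ : ∃ R : ℝ, 0 < R ∧ ∀ x ∈ P, ‖x‖ ≤ R := by
    obtain ⟨R, hR⟩ := hPcpt.isBounded.exists_norm_le
    exact ⟨max R 1, lt_of_lt_of_le one_pos (le_max_right _ _),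
      fun x hx => (hR x hx).trans (le_max_left _ _)⟩
  -- m ≥ 1
  have hm : 0 < m := by
    by_contra hm0
    have hx : (fun _ : Fin d => R + 1) ∈ P := by
      rw [hmemP]; intro j; exact absurd j.isLt (by omega)
    have h1 : |R + 1| ≤ ‖(fun _ : Fin d => R + 1)‖ := by
      simpa using norm_le_pi_norm (fun _ : Fin d => R + 1) ⟨0, hd⟩
    have h2 := hRb _ hx
    rw [abs_of_pos (by linarith)] at h1
    linarith
  -- normals are nonzero
  have hnz : ∀ j, ∃ i, n j i ≠ 0 := by
    intro j
    by_contra hc; push_neg at hc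
    have h0 : Finset.univ.gcd (n j) = 0 := Finset.gcd_eq_zero_iff.2 (fun i _ => hc i)
    rw [hgcd j] at h0
    exact one_ne_zero h0
  have hpairself : ∀ j, 0 < pairing (n j) (fun i => (n j i : ℝ)) := by
    intro j
    obtain ⟨i0, hi0⟩ := hnz j
    have he : pairing (n j) (fun i => (n j i : ℝ)) = ∑ i, ((n j i : ℝ)) ^ 2 := by
      unfold pairing; exact Finset.sum_congr rfl (fun i _ => by ring)
    rw [he]
    refine Finset.sum_pos' (fun i _ => sq_nonneg _) ⟨i0, Finset.mem_univ _, ?_⟩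
    have : ((n j i0 : ℝ)) ≠ 0 := Int.cast_ne_zero.2 hi0
    positivity
  -- interior point with strict slacks
  obtain ⟨p₀, hp₀P, hp₀s⟩ : ∃ p₀, p₀ ∈ P ∧ ∀ j, -(h j : ℝ) < pairing (n j) p₀ := by
    obtain ⟨p₀, hp₀⟩ := hfull
    refine ⟨p₀, interior_subset hp₀, fun j => ?_⟩
    have hge := (hmemP p₀).1 (interior_subset hp₀) j
    rcases lt_or_eq_of_le hge with hlt | heq
    · exact hlt
    · exfalso
      obtain ⟨ε, hε, hball⟩ := Metric.isOpen_iff.1 isOpen_interior p₀ hp₀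
      set ν : Fin d → ℝ := fun i => (n j i : ℝ) with hν
      have hνn : 0 ≤ ‖ν‖ := norm_nonneg _
      set δ := ε / (2 * (‖ν‖ + 1)) with hδdef
      have hδ : 0 < δ := by positivity
      have hmem : p₀ - δ • ν ∈ P := by
        refine interior_subset (hball ?_)
        rw [Metric.mem_ball, dist_eq_norm, sub_sub_cancel_left, norm_neg, norm_smul,
          Real.norm_eq_abs, abs_of_pos hδ]
        calc δ * ‖ν‖ < δ * (2 * (‖ν‖ + 1)) := by nlinarith
          _ = ε := by rw [hδdef]; field_simp
      have h2 := (hmemP _).1 hmem j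
      rw [pairing_sub, pairing_smul, ← heq] at h2
      nlinarith [hpairself j]
  -- no recession direction
  have hnorec : ∀ z : Fin d → ℝ, (∀ j, 0 < pairing (n j) z) → False := by
    intro z hz
    have hz0 : z ≠ 0 := by
      intro h0
      have := hz ⟨0, hm⟩
      rw [h0] at this
      simp [pairing] at this
    have hmem : ∀ t : ℝ, 0 ≤ t → p₀ + t • z ∈ P := by
      intro t ht
      rw [hmemP]; intro j
      rw [pairing_add, pairing_smul]
      have h1 := (hmemP p₀).1 hp₀P j
      nlinarith [hz j]
    have hn : 0 < ‖z‖ := norm_pos_iff.2 hz0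
    set t := (R + ‖p₀‖ + 1) / ‖z‖ with htdef
    have ht : 0 ≤ t := by positivity
    have h2 := hRb _ (hmem t ht)
    have h3 : ‖t • z‖ - ‖p₀‖ ≤ ‖p₀ + t • z‖ := by
      have h4 : ‖t • z‖ ≤ ‖p₀ + t • z‖ + ‖p₀‖ := by
        calc ‖t • z‖ = ‖(p₀ + t • z) - p₀‖ := by rw [add_sub_cancel_left]
          _ ≤ ‖p₀ + t • z‖ + ‖p₀‖ := norm_sub_le _ _
      linarith
    rw [norm_smul, Real.norm_eq_abs, abs_of_nonneg ht, htdef, div_mul_cancel₀ _ (ne_of_gt hn)]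
      at h3
    linarith
  -- interior points of the cone have level ≥ 1
  have hlev : ∀ ab : (Fin d → ℝ) × ℝ, ab ∈ intCone n h → ab.1 ∈ latticePoints d →
      ∀ l : ℤ, ab.2 = (l : ℝ) → 1 ≤ l := by
    intro ab hab hlat l hl
    by_contra hlneg; push_neg at hlneg
    have hl0 : l ≤ 0 := by omega
    apply hnorec (ab.1 + ((-l : ℤ) : ℝ) • p₀)
    intro j
    have h1 : pairing (n j) ab.1 > -(ab.2 * (h j : ℝ)) := hab j
    rw [hl] at h1
    have h2 : pairing (n j) p₀ ≥ -(h j : ℝ) := (hmemP p₀).1 hp₀P j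
    rw [pairing_add, pairing_smul]
    have hlr : (0 : ℝ) ≤ ((-l : ℤ) : ℝ) := by
      have : (0:ℤ) ≤ -l := by omega
      exact_mod_cast this
    have h4 : ((-l : ℤ) : ℝ) * -(h j : ℝ) ≤ ((-l : ℤ) : ℝ) * pairing (n j) p₀ :=
      mul_le_mul_of_nonneg_left h2 hlr
    have h5 : ((-l : ℤ) : ℝ) = -(l : ℝ) := by push_cast; ring
    rw [h5] at h4 ⊢
    nlinarith
  -- the candidate reflexive polytope
  set Q : Set (Fin d → ℝ) := {x | ∀ i, pairing (n i) x ≥ -1} with hQdef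
  have hQmem : ∀ x, x ∈ Q ↔ ∀ i, pairing (n i) x ≥ -1 := fun x => Iff.rfl
  have hQconv : Convex ℝ Q := by
    intro x hx y hy a b ha hb hab
    intro i
    rw [pairing_add, pairing_smul, pairing_smul]
    have h1 := hx i; have h2 := hy i
    nlinarith
  -- KEY STEP: nearly Gorenstein decomposition of lattice points of P at level 1
  have hkey : ∀ p, p ∈ P → p ∈ latticePoints d →
      ∃ v, v ∈ Q ∩ latticePoints d ∧
        ∀ j, pairing (n j) p = -(h j : ℝ) → pairing (n j) v = -1 := by
    intro p hpP hplat
    have hin : ((p, (1 : ℝ)) : (Fin d → ℝ) × ℝ) ∈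
        (coneOver n h ∩ latticePairs d) \ {(0 : (Fin d → ℝ) × ℝ)} := by
      refine ⟨⟨fun i => ?_, ⟨hplat, 1, by norm_num⟩⟩, ?_⟩
      · show pairing (n i) p ≥ -((1:ℝ) * (h i : ℝ))
        rw [one_mul]
        exact (hmemP p).1 hpP i
      · simp [Prod.ext_iff]
    have hsum := hng hin
    rw [Set.mem_add] at hsum
    obtain ⟨a, ha, b, hb, hab⟩ := hsum
    obtain ⟨haI, halat, la, hla⟩ := ha
    obtain ⟨hbA, hblat, sb, hsb⟩ := hb
    have hab1 : a.1 + b.1 = p := congrArg Prod.fst hab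
    have hab2 : a.2 + b.2 = 1 := congrArg Prod.snd hab
    have hls : la + sb = 1 := by
      have : (la : ℝ) + (sb : ℝ) = 1 := by rw [← hla, ← hsb]; exact_mod_cast hab2
      exact_mod_cast this
    have hl1 : 1 ≤ la := hlev a haI halat la hla
    obtain ⟨pz, hpz⟩ := latt_exists hplat
    obtain ⟨wz, hwz⟩ := latt_exists hblat
    set A : Fin m → ℤ := fun j => ∑ i, n j i * wz i with hA
    set B : Fin m → ℤ := fun j => ∑ i, n j i * pz i with hB
    have hAg : ∀ j, -(sb * h j) - 1 ≤ A j := by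
      intro j
      have := hbA j
      rw [hsb, hwz, pairing_int] at this
      exact_mod_cast this
    have hBg : ∀ j, -(h j) ≤ B j := by
      intro j
      have := (hmemP p).1 hpP j
      rw [hpz, pairing_int] at this
      exact_mod_cast this
    have hBA : ∀ j, -(la * h j) + 1 ≤ B j - A j := by
      intro j
      have h1 : pairing (n j) a.1 > -(a.2 * (h j : ℝ)) := haI j
      have ha1 : a.1 = p - b.1 := eq_sub_of_add_eq hab1
      rw [ha1, pairing_sub, hla, hpz, hwz, pairing_int, pairing_int] at h1
      have h2 : -(la * h j) < B j - A j := by exact_mod_cast h1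
      omega
    set vz : Fin d → ℤ := fun i => wz i + (la - 1) * pz i with hvz
    have hvpair : ∀ j, pairing (n j) (fun i => (vz i : ℝ)) = ((A j + (la - 1) * B j : ℤ) : ℝ) := by
      intro j
      rw [pairing_int]
      congr 1
      rw [hA, hB, Finset.mul_sum, ← Finset.sum_add_distrib]
      exact Finset.sum_congr rfl (fun i _ => by rw [hvz]; ring)
    refine ⟨fun i => (vz i : ℝ), ⟨?_, latt_of_int vz⟩, ?_⟩
    · intro j
      rw [hvpair j]
      have hshj : sb * h j = h j - la * h j := by
        have : sb = 1 - la := by omega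
        rw [this]; ring
      have hmul : (la - 1) * (-(h j)) ≤ (la - 1) * B j :=
        mul_le_mul_of_nonneg_left (hBg j) (by omega)
      have hexp : (la - 1) * (-(h j)) = h j - la * h j := by ring
      have hZ : (-1 : ℤ) ≤ A j + (la - 1) * B j := by
        have h1 := hAg j
        rw [hshj] at h1
        rw [hexp] at hmul
        linarith
      exact_mod_cast hZ
    · intro j hj
      rw [hpz, pairing_int] at hj
      have hBj : B j = -(h j) := by exact_mod_cast hj
      rw [hvpair j]
      have hAub : A j ≤ -(h j) + la * h j - 1 := by
        have := hBA j
        rw [hBj] at this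
        linarith
      have hAlb : -(h j) + la * h j - 1 ≤ A j := by
        have h1 := hAg j
        have hshj : sb * h j = h j - la * h j := by
          have : sb = 1 - la := by omega
          rw [this]; ring
        rw [hshj] at h1
        linarith
      have hAj : A j = -(h j) + la * h j - 1 := le_antisymm hAub hAlb
      have hZ : A j + (la - 1) * B j = -1 := by
        rw [hAj, hBj]; ring
      rw [hZ]; norm_num
  -- 0 is an interior point of Q
  have hQ0 : (0 : Fin d → ℝ) ∈ interior Q := by
    set C : ℝ := (∑ j, (∑ i, |(n j i : ℝ)|)) + 1 with hC
    have hCj : ∀ j, (∑ i, |(n j i : ℝ)|) ≤ C - 1 := by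
      intro j
      have : (∑ i, |(n j i : ℝ)|) ≤ ∑ j', (∑ i, |(n j' i : ℝ)|) :=
        Finset.single_le_sum (f := fun j' => ∑ i, |(n j' i : ℝ)|)
          (fun j' _ => Finset.sum_nonneg (fun i _ => abs_nonneg _)) (Finset.mem_univ j)
      linarith
    have hC0 : 0 < C := by
      have : (0:ℝ) ≤ ∑ j, (∑ i, |(n j i : ℝ)|) :=
        Finset.sum_nonneg (fun j _ => Finset.sum_nonneg (fun i _ => abs_nonneg _))
      linarith
    refine mem_interior.2 ⟨Metric.ball 0 (1 / C), ?_, Metric.isOpen_ball,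
      Metric.mem_ball_self (by positivity)⟩
    intro x hx
    rw [Metric.mem_ball, dist_zero_right] at hx
    intro j
    have h1 := pairing_abs_le (n j) x
    have h2 : (∑ i, |(n j i : ℝ)|) * ‖x‖ ≤ (C - 1) * (1 / C) := by
      apply mul_le_mul (hCj j) (le_of_lt hx) (norm_nonneg _)
      linarith [hCj j, Finset.sum_nonneg (fun i (_ : i ∈ Finset.univ) => abs_nonneg ((n j i : ℝ)))]
    have h3 : (C - 1) * (1 / C) < 1 := by
      rw [mul_one_div, div_lt_one hC0]; linarith
    have := abs_le.1 (le_of_lt (lt_of_le_of_lt (h1.trans h2) h3))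
    linarith [this.1]
  -- Q is bounded, so its lattice points form a finite set
  set δ : ℝ := Finset.univ.inf' (Finset.univ_nonempty_iff.mpr ⟨⟨0, hm⟩⟩)
      (fun j => pairing (n j) p₀ + (h j : ℝ)) with hδdef
  have hδpos : 0 < δ := by
    rw [hδdef, Finset.lt_inf'_iff]
    intro j _
    linarith [hp₀s j]
  have hδle : ∀ j, δ ≤ pairing (n j) p₀ + (h j : ℝ) := by
    intro j
    exact Finset.inf'_le _ (Finset.mem_univ j)
  have hQbound : ∀ x ∈ Q, ‖x‖ ≤ (R + ‖p₀‖) / δ := by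
    intro x hx
    have hmem : p₀ + δ • x ∈ P := by
      rw [hmemP]; intro j
      rw [pairing_add, pairing_smul]
      have h1 := hδle j
      have h2 : pairing (n j) x ≥ -1 := hx j
      nlinarith
    have h2 := hRb _ hmem
    have h3 : ‖δ • x‖ ≤ R + ‖p₀‖ := by
      have he : δ • x = (p₀ + δ • x) - p₀ := by rw [add_sub_cancel_left]
      rw [he]
      exact (norm_sub_le _ _).trans (by linarith)
    rw [norm_smul, Real.norm_eq_abs, abs_of_pos hδpos] at h3
    rw [le_div_iff₀ hδpos, mul_comm]
    exact h3
  have hWfin : (Q ∩ latticePoints d).Finite := by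
    set Bd : ℝ := (R + ‖p₀‖) / δ with hBd
    have hsub : Q ∩ latticePoints d ⊆
        (fun z : Fin d → ℤ => fun i => (z i : ℝ)) ''
          (Set.pi Set.univ (fun _ : Fin d => (Finset.Icc (-⌈Bd⌉) ⌈Bd⌉ : Finset ℤ))) := by
      rintro x ⟨hxQ, hxl⟩
      obtain ⟨z, rfl⟩ := latt_exists hxl
      refine ⟨z, fun i _ => ?_, rfl⟩
      have h1 : |((z i : ℝ))| ≤ Bd :=
        le_trans (by simpa using norm_le_pi_norm (fun i => ((z i : ℝ))) i) (hQbound _ hxQ)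
      have h2 := abs_le.1 h1
      simp only [Finset.coe_Icc, Set.mem_Icc]
      constructor
      · have : ((-⌈Bd⌉ : ℤ) : ℝ) ≤ (z i : ℝ) := by
          push_cast
          linarith [Int.le_ceil Bd]
        exact_mod_cast this
      · have : ((z i : ℝ)) ≤ ((⌈Bd⌉ : ℤ) : ℝ) := by
          linarith [Int.le_ceil Bd]
        exact_mod_cast this
    refine Set.Finite.subset (Set.Finite.image _ ?_) hsub
    exact Set.Finite.pi (fun i => (Finset.Icc _ _).finite_toSet)
  -- the support lemma: every linear functional is minimized on Q at a lattice point of Q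
  set Nv : Fin m → (Fin d → ℝ) := fun j i => (n j i : ℝ) with hNv
  have hpairNv : ∀ (j) (x : Fin d → ℝ), pairing (n j) x = rdot (Nv j) x := fun j x => rfl
  have hVne : V.Nonempty := by
    rcases V.eq_empty_or_nonempty with he | hne
    · exfalso
      rw [he] at hPeq
      simp only [Finset.coe_empty, convexHull_empty] at hPeq
      rw [hPeq] at hp₀P
      exact hp₀P
    · exact hne
  have hsupp : ∀ ρ : Fin d → ℝ, ∃ v, v ∈ Q ∩ latticePoints d ∧
      ∀ x ∈ Q, rdot ρ v ≤ rdot ρ x := by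
    intro ρ
    obtain ⟨p, hpV, hpmin⟩ := V.exists_min_image (fun x => rdot ρ x) hVne
    have hpP : p ∈ P := hPeq ▸ subset_convexHull ℝ _ hpV
    have hpminP : ∀ x ∈ P, rdot ρ p ≤ rdot ρ x := by
      intro x hx
      have hcvx : Convex ℝ {x : Fin d → ℝ | rdot ρ p ≤ rdot ρ x} := by
        intro x1 h1 x2 h2 a b ha hb hab
        simp only [Set.mem_setOf_eq] at h1 h2 ⊢
        rw [rdot_add_right, rdot_smul_right, rdot_smul_right]
        calc rdot ρ p = a * rdot ρ p + b * rdot ρ p := by rw [← add_mul, hab, one_mul]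
          _ ≤ a * rdot ρ x1 + b * rdot ρ x2 :=
            add_le_add (mul_le_mul_of_nonneg_left h1 ha) (mul_le_mul_of_nonneg_left h2 hb)
      have hsub : P ⊆ {x : Fin d → ℝ | rdot ρ p ≤ rdot ρ x} := by
        rw [hPeq]
        exact convexHull_min (fun v hv => hpmin v hv) hcvx
      exact hsub hx
    obtain ⟨v, hvQ, hvt⟩ := hkey p hpP (hVlat hpV)
    refine ⟨v, hvQ, ?_⟩
    set SK : Set (Fin d → ℝ) := {y | ∃ c : Fin m → ℝ, (∀ j, 0 ≤ c j) ∧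
        (∀ j, c j ≠ 0 → pairing (n j) p = -(h j : ℝ)) ∧ y = ∑ j, c j • Nv j} with hSK
    have hSKconv : Convex ℝ SK := by
      rintro y ⟨c, hc0, hct, rfl⟩ y' ⟨c', hc0', hct', rfl⟩ a b ha hb hab
      refine ⟨fun j => a * c j + b * c' j,
        fun j => add_nonneg (mul_nonneg ha (hc0 j)) (mul_nonneg hb (hc0' j)),
        fun j hj => ?_, ?_⟩
      · by_cases hc : c j = 0
        · by_cases hc' : c' j = 0
          · exfalso
            apply hj
            show a * c j + b * c' j = 0
            rw [hc, hc']; ring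
          · exact hct' j hc'
        · exact hct j hc
      · rw [Finset.smul_sum, Finset.smul_sum, ← Finset.sum_add_distrib]
        exact Finset.sum_congr rfl (fun j _ => by
          rw [smul_smul, smul_smul, ← add_smul])
    have hρcl : ρ ∈ closure SK := by
      by_contra hρ
      obtain ⟨f, u, hfu, huρ⟩ := geometric_hahn_banach_closed_point
        hSKconv.closure isClosed_closure hρ
      have h0SK : (0 : Fin d → ℝ) ∈ SK := by
        refine ⟨fun _ => 0, fun j => le_refl _, fun j hj => absurd rfl hj, ?_⟩
        simp
      have hu : 0 < u := by
        have := hfu 0 (subset_closure h0SK)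
        rwa [map_zero] at this
      set g : Fin d → ℝ := fun i => f (fun j => if i = j then 1 else 0) with hg
      have hfg : ∀ x, f x = rdot x g := fun x => clm_eq_rdot f x
      have hfn : ∀ j, pairing (n j) p = -(h j : ℝ) → pairing (n j) g ≤ 0 := by
        intro j hjt
        by_contra hpos; push_neg at hpos
        have hfν : f (Nv j) = pairing (n j) g := by
          rw [hfg, hpairNv]
        have hmemSK : ((u + 1) / pairing (n j) g) • Nv j ∈ SK := by
          refine ⟨fun j' => if j' = j then (u + 1) / pairing (n j) g else 0,
            fun j' => ?_, fun j' hj' => ?_, ?_⟩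
          · show (0:ℝ) ≤ if j' = j then (u + 1) / pairing (n j) g else 0
            by_cases hjj : j' = j
            · rw [if_pos hjj]
              exact le_of_lt (div_pos (by linarith) hpos)
            · rw [if_neg hjj]
          · by_cases hjj : j' = j
            · rwa [hjj]
            · simp only [if_neg hjj] at hj'
              exact absurd rfl hj'
          · have hterm : ∀ j' : Fin m,
                (if j' = j then (u + 1) / pairing (n j) g else 0) • Nv j'
                  = if j' = j then ((u + 1) / pairing (n j) g) • Nv j' else 0 := by
              intro j'
              by_cases hjj : j' = j <;> simp [hjj]
            rw [Finset.sum_congr rfl (fun j' _ => hterm j'),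
              Finset.sum_ite_eq' Finset.univ j (fun j' => ((u + 1) / pairing (n j) g) • Nv j')]
            simp
        have := hfu _ (subset_closure hmemSK)
        rw [map_smul, smul_eq_mul, hfν, div_mul_cancel₀ _ (ne_of_gt hpos)] at this
        linarith
      -- construct a better point of P, contradiction with minimality
      set tj : Fin m → ℝ := fun j =>
        if pairing (n j) p = -(h j : ℝ) then 1
        else (pairing (n j) p + (h j : ℝ)) / (|pairing (n j) g| + 1) with htj
      have htjpos : ∀ j, 0 < tj j := by
        intro j
        by_cases hjt : pairing (n j) p = -(h j : ℝ)
        · simp only [htj, if_pos hjt]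
          norm_num
        · have h1 := (hmemP p).1 hpP j
          have h2 : -(h j : ℝ) < pairing (n j) p := lt_of_le_of_ne h1 (Ne.symm hjt)
          simp only [htj, if_neg hjt]
          exact div_pos (by linarith) (by positivity)
      set t : ℝ := Finset.univ.inf' (Finset.univ_nonempty_iff.mpr ⟨⟨0, hm⟩⟩) tj with ht
      have htpos : 0 < t := by
        rw [ht, Finset.lt_inf'_iff]
        exact fun j _ => htjpos j
      have htle : ∀ j, t ≤ tj j := fun j => Finset.inf'_le _ (Finset.mem_univ j)
      have hmem : p - t • g ∈ P := by
        rw [hmemP]; intro j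
        rw [pairing_sub, pairing_smul]
        by_cases hjt : pairing (n j) p = -(h j : ℝ)
        · have h1 := hfn j hjt
          rw [hjt]
          nlinarith
        · have h1 := (hmemP p).1 hpP j
          have h2 : -(h j : ℝ) < pairing (n j) p := lt_of_le_of_ne h1 (Ne.symm hjt)
          have h3 : t ≤ (pairing (n j) p + (h j : ℝ)) / (|pairing (n j) g| + 1) := by
            have h3' := htle j
            simp only [htj, if_neg hjt] at h3'
            exact h3'
          have h4 : pairing (n j) g ≤ |pairing (n j) g| := le_abs_self _
          have h5 : 0 ≤ |pairing (n j) g| := abs_nonneg _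
          have h6 : t * pairing (n j) g ≤ t * |pairing (n j) g| :=
            mul_le_mul_of_nonneg_left h4 (le_of_lt htpos)
          have h7 : t * |pairing (n j) g| ≤
              ((pairing (n j) p + (h j : ℝ)) / (|pairing (n j) g| + 1)) * |pairing (n j) g| :=
            mul_le_mul_of_nonneg_right h3 h5
          have h8 : ((pairing (n j) p + (h j : ℝ)) / (|pairing (n j) g| + 1)) *
              |pairing (n j) g| < pairing (n j) p + (h j : ℝ) := by
            rw [div_mul_eq_mul_div, div_lt_iff₀ (by positivity)]
            nlinarith
          linarith
      have hlt := hpminP _ hmem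
      rw [rdot_sub_right, rdot_smul_right] at hlt
      have hfρ : f ρ = rdot ρ g := hfg ρ
      have h9 : rdot ρ g > u := by rw [← hfρ]; exact huρ
      nlinarith
    -- pass to the closure
    intro x hx
    have hSKle : ∀ y ∈ SK, rdot y v ≤ rdot y x := by
      rintro y ⟨c, hc0, hct, rfl⟩
      rw [rdot_sum_left, rdot_sum_left]
      refine Finset.sum_le_sum (fun j _ => ?_)
      rw [rdot_smul_left, rdot_smul_left, ← hpairNv, ← hpairNv]
      by_cases hcj : c j = 0
      · rw [hcj]; simp
      · have h1 : pairing (n j) v = -1 := hvt j (hct j hcj)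
        have h2 : pairing (n j) x ≥ -1 := hx j
        rw [h1]
        exact mul_le_mul_of_nonneg_left (by linarith) (hc0 j)
    have hclosed : IsClosed {y : Fin d → ℝ | rdot y v ≤ rdot y x} :=
      isClosed_le (continuous_rdot_left v) (continuous_rdot_left x)
    exact (closure_minimal hSKle hclosed) hρcl
  -- Q is the convex hull of its lattice points
  set W : Set (Fin d → ℝ) := Q ∩ latticePoints d with hW
  have hQW : Q = convexHull ℝ W := by
    apply Set.Subset.antisymm
    · intro x hx
      by_contra hxc
      have hWcl : IsClosed (convexHull ℝ W) := (hWfin.isCompact_convexHull ℝ).isClosed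
      obtain ⟨f, u, hfw, hfx⟩ := geometric_hahn_banach_closed_point
        (convex_convexHull ℝ W) hWcl hxc
      set g : Fin d → ℝ := fun i => f (fun j => if i = j then 1 else 0) with hg
      have hfg : ∀ y, f y = rdot y g := fun y => clm_eq_rdot f y
      obtain ⟨v, hvW, hvmin⟩ := hsupp (-g)
      have h1 : rdot (-g) v ≤ rdot (-g) x := hvmin x hx
      have h2 : f v < u := hfw v (subset_convexHull ℝ W hvW)
      have h3 : u < f x := hfx
      rw [hfg] at h2 h3
      have h4 : ∀ y : Fin d → ℝ, rdot (-g) y = -rdot y g := by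
        intro y; rw [rdot_comm, rdot_neg_right]
      rw [h4, h4] at h1
      linarith
    · exact convexHull_min Set.inter_subset_left hQconv
  -- the polar dual of Q is the convex hull of the normal vectors
  set Nset : Set (Fin d → ℝ) := Set.range Nv with hNset
  have hNfin : Nset.Finite := Set.finite_range _
  have hNcl : IsClosed (convexHull ℝ Nset) := (hNfin.isCompact_convexHull ℝ).isClosed
  have h0N : (0 : Fin d → ℝ) ∈ convexHull ℝ Nset := by
    by_contra h0
    obtain ⟨f, u, hfN, hf0⟩ := geometric_hahn_banach_closed_point
      (convex_convexHull ℝ Nset) hNcl h0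
    have hu : u < 0 := by
      have h5 := hf0; rwa [map_zero] at h5
    set g : Fin d → ℝ := fun i => f (fun j => if i = j then 1 else 0) with hg
    have hfg : ∀ y, f y = rdot y g := fun y => clm_eq_rdot f y
    apply hnorec (-g)
    intro j
    have h1 : f (Nv j) < u := hfN _ (subset_convexHull ℝ Nset ⟨j, rfl⟩)
    rw [hfg] at h1
    have h2 : rdot (Nv j) g = pairing (n j) g := (hpairNv j g).symm
    rw [pairing_neg]
    rw [h2] at h1
    linarith
  have hPDsub1 : polarDual Q ⊆ convexHull ℝ Nset := by
    intro y hy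
    by_contra hyc
    obtain ⟨f, u, hfN, hfy⟩ := geometric_hahn_banach_closed_point
      (convex_convexHull ℝ Nset) hNcl hyc
    have hu : 0 < u := by
      have h5 := hfN 0 h0N
      rwa [map_zero] at h5
    set g : Fin d → ℝ := fun i => f (fun j => if i = j then 1 else 0) with hg
    have hfg : ∀ y, f y = rdot y g := fun y => clm_eq_rdot f y
    set x₀ : Fin d → ℝ := (-u⁻¹) • g with hx₀
    have hx₀Q : x₀ ∈ Q := by
      intro j
      rw [hx₀, pairing_smul]
      have h1 : f (Nv j) < u := hfN _ (subset_convexHull ℝ Nset ⟨j, rfl⟩)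
      rw [hfg] at h1
      have h2 : pairing (n j) g < u := by rw [hpairNv]; exact h1
      have h3 : u⁻¹ * pairing (n j) g < u⁻¹ * u :=
        mul_lt_mul_of_pos_left h2 (inv_pos.2 hu)
      rw [inv_mul_cancel₀ (ne_of_gt hu)] at h3
      have h4 : (-u⁻¹) * pairing (n j) g = -(u⁻¹ * pairing (n j) g) := by ring
      rw [h4]
      linarith
    have hmemy : rdot y x₀ ≥ -1 := hy x₀ hx₀Q
    have h6 : rdot y x₀ = (-u⁻¹) * rdot y g := by rw [hx₀]; exact rdot_smul_right _ _ _
    have h7 : u < rdot y g := by rw [← hfg]; exact hfy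
    have h8 : u⁻¹ * u < u⁻¹ * rdot y g := mul_lt_mul_of_pos_left h7 (inv_pos.2 hu)
    rw [inv_mul_cancel₀ (ne_of_gt hu)] at h8
    have h9 : (-u⁻¹) * rdot y g = -(u⁻¹ * rdot y g) := by ring
    rw [h6, h9] at hmemy
    linarith
  have hPDsub2 : convexHull ℝ Nset ⊆ polarDual Q := by
    refine convexHull_min ?_ ?_
    · rintro y ⟨j, rfl⟩
      intro x hx
      exact hx j
    · intro y1 h1 y2 h2 a b ha hb hab
      intro x hx
      have e1 : rdot y1 x ≥ -1 := h1 x hx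
      have e2 : rdot y2 x ≥ -1 := h2 x hx
      show (∑ i, (a • y1 + b • y2) i * x i) ≥ -1
      have he : (∑ i, (a • y1 + b • y2) i * x i) = a * rdot y1 x + b * rdot y2 x := by
        show rdot (a • y1 + b • y2) x = _
        rw [rdot_add_left, rdot_smul_left, rdot_smul_left]
      rw [he]
      have hc1 : a * (-1) ≤ a * rdot y1 x := mul_le_mul_of_nonneg_left e1 ha
      have hc2 : b * (-1) ≤ b * rdot y2 x := mul_le_mul_of_nonneg_left e2 hb
      nlinarith
  have hPD : polarDual Q = convexHull ℝ Nset := Set.Subset.antisymm hPDsub1 hPDsub2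
  -- assemble the answer
  refine ⟨Q, ⟨⟨hWfin.toFinset, ?_, ?_⟩, hQ0, ⟨Finset.image Nv Finset.univ, ?_, ?_⟩⟩, ?_, ?_⟩
  · rw [Set.Finite.coe_toFinset]
    exact Set.inter_subset_right
  · rw [Set.Finite.coe_toFinset]
    exact hQW
  · rw [Finset.coe_image, Finset.coe_univ, Set.image_univ]
    rintro y ⟨j, rfl⟩
    exact latt_of_int (n j)
  · rw [Finset.coe_image, Finset.coe_univ, Set.image_univ]
    exact hPD
  · -- each normal vector lies on the frontier of the polar dual
    intro i
    refine ⟨?_, latt_of_int (n i)⟩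
    rw [hPD, IsClosed.frontier_eq hNcl]
    refine ⟨subset_convexHull ℝ Nset ⟨i, rfl⟩, ?_⟩
    intro hint
    set ν : Fin d → ℝ := fun j => (n i j : ℝ) with hν
    have hνNv : ν = Nv i := rfl
    obtain ⟨ε, hεpos, hball⟩ := Metric.isOpen_iff.1 isOpen_interior _ hint
    have hνn : (0:ℝ) ≤ ‖ν‖ := norm_nonneg _
    set ε' : ℝ := ε / (2 * (‖ν‖ + 1)) with hε'
    have hε'pos : 0 < ε' := by positivity
    have hmem1 : (1 + ε') • ν ∈ convexHull ℝ Nset := by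
      refine interior_subset (hball ?_)
      rw [Metric.mem_ball, dist_eq_norm]
      have he : (1 + ε') • ν - ν = ε' • ν := by
        rw [add_smul, one_smul, add_sub_cancel_left]
      rw [he, norm_smul, Real.norm_eq_abs, abs_of_pos hε'pos]
      calc ε' * ‖ν‖ < ε' * (2 * (‖ν‖ + 1)) := by nlinarith
        _ = ε := by rw [hε']; field_simp
    rw [← hPD] at hmem1
    have hWnn : ∀ w ∈ W, 0 ≤ pairing (n i) w := by
      rintro w ⟨hwQ, hwlat⟩
      obtain ⟨z, rfl⟩ := latt_exists hwlat
      have h1 : rdot ((1 + ε') • ν) (fun i' => (z i' : ℝ)) ≥ -1 := hmem1 _ hwQ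
      rw [rdot_smul_left] at h1
      have h2 : rdot ν (fun i' => (z i' : ℝ)) = pairing (n i) (fun i' => (z i' : ℝ)) := by
        rw [hνNv]; exact (hpairNv i _).symm
      rw [h2, pairing_int] at h1
      rw [pairing_int]
      by_contra hneg; push_neg at hneg
      have h3 : (∑ i', n i i' * z i') ≤ -1 := by
        have h3' : (∑ i', n i i' * z i') < 0 := by exact_mod_cast hneg
        omega
      have h4 : ((∑ i', n i i' * z i' : ℤ) : ℝ) ≤ -1 := by exact_mod_cast h3
      nlinarith
    have hQnn : ∀ x ∈ Q, 0 ≤ pairing (n i) x := by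
      intro x hx
      have hx' : x ∈ convexHull ℝ W := hQW ▸ hx
      have hcvx : Convex ℝ {x : Fin d → ℝ | 0 ≤ pairing (n i) x} := by
        intro x1 h1 x2 h2 a b ha hb hab
        simp only [Set.mem_setOf_eq] at h1 h2 ⊢
        rw [pairing_add, pairing_smul, pairing_smul]
        exact add_nonneg (mul_nonneg ha h1) (mul_nonneg hb h2)
      exact convexHull_min hWnn hcvx hx'
    obtain ⟨ε2, hε2pos, hball2⟩ := Metric.isOpen_iff.1 isOpen_interior _ hQ0
    set c : ℝ := ε2 / (2 * (‖ν‖ + 1)) with hc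
    have hcpos : 0 < c := by positivity
    have hmemQ : (-c) • ν ∈ Q := by
      refine interior_subset (hball2 ?_)
      rw [Metric.mem_ball, dist_eq_norm, sub_zero, norm_smul, Real.norm_eq_abs, abs_neg,
        abs_of_pos hcpos]
      calc c * ‖ν‖ < c * (2 * (‖ν‖ + 1)) := by nlinarith
        _ = ε2 := by rw [hc]; field_simp
    have h5 := hQnn _ hmemQ
    rw [pairing_smul] at h5
    have h6 : 0 < pairing (n i) ν := hpairself i
    nlinarith
  · -- extreme points of the polar dual are normal vectors
    rw [hPD]
    intro y hy
    obtain ⟨i, rfl⟩ := extremePoints_convexHull_subset hy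
    exact ⟨i, rfl⟩
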